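/- arXiv:2601.12843 — 3 statements merged into one kernel-verified Lean document; each statement's English description precedes it below -/
import Mathlib

section
/- Kummer's transformation: for complex a, b, z with b not a nonpositive integer, M(a, b, z) = e^z M(b - a, b, -z). -/
open Complex Finset Polynomial

private lemma pm_add (n m : ℕ) (x : ℂ) :
    (ascPochhammer ℂ (n + m)).eval x
      = (ascPochhammer ℂ n).eval x * (ascPochhammer ℂ m).eval (x + n) := by
  have := congrArg (Polynomial.eval x) (ascPochhammer_mul (S := ℂ) n m)
  simpa [Polynomial.eval_comp] using this.symm

private lemma pm_succ_left (n : ℕ) (x : ℂ) :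
    (ascPochhammer ℂ (n + 1)).eval x = x * (ascPochhammer ℂ n).eval (x + 1) := by
  have := pm_add 1 n x
  simpa [add_comm 1 n, ascPochhammer_one] using this

private lemma key : ∀ (n : ℕ) (b c : ℂ),
    ∑ j ∈ range (n + 1), (-1 : ℂ) ^ j * (n.choose j : ℂ) * (ascPochhammer ℂ j).eval c *
        (ascPochhammer ℂ (n - j)).eval (b + j)
      = (ascPochhammer ℂ n).eval (b - c) := by
  intro n
  induction n with
  | zero => intro b c; simp
  | succ n ih =>
    intro b c
    rw [Finset.sum_range_succ']
    have hstep : ∀ i ∈ range (n + 1),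
        (-1 : ℂ) ^ (i+1) * ((n+1).choose (i+1) : ℂ) * (ascPochhammer ℂ (i+1)).eval c *
          (ascPochhammer ℂ (n + 1 - (i+1))).eval (b + (i+1 : ℕ))
        = ((-1 : ℂ) ^ (i+1) * (n.choose (i+1) : ℂ) * (ascPochhammer ℂ (i+1)).eval c *
            (ascPochhammer ℂ (n - i)).eval (b + (i+1 : ℕ)))
          + (-c) * ((-1 : ℂ) ^ i * (n.choose i : ℂ) * (ascPochhammer ℂ i).eval (c + 1) *
            (ascPochhammer ℂ (n - i)).eval ((b + 1) + i)) := by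
      intro i _
      have h1 : (n + 1 - (i + 1)) = n - i := by omega
      have h2 : ((n+1).choose (i+1) : ℂ) = (n.choose i : ℂ) + (n.choose (i+1) : ℂ) := by
        rw [Nat.choose_succ_succ]; push_cast; ring
      have h3 : (b + ((i:ℂ) + 1)) = (b + 1) + i := by ring
      rw [h1, h2, pm_succ_left i c]
      push_cast
      rw [h3]
      ring
    rw [Finset.sum_congr rfl hstep, Finset.sum_add_distrib]
    have hB : (∑ i ∈ range (n + 1), (-c) * ((-1 : ℂ) ^ i * (n.choose i : ℂ) *
          (ascPochhammer ℂ i).eval (c + 1) * (ascPochhammer ℂ (n - i)).eval ((b + 1) + i)))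
        = -c * (ascPochhammer ℂ n).eval (b - c) := by
      rw [← Finset.mul_sum, ih (b + 1) (c + 1)]
      norm_num
    rw [hB]
    -- first part
    set G : ℕ → ℂ := fun j => (-1 : ℂ) ^ j * (n.choose j : ℂ) * (ascPochhammer ℂ j).eval c *
        (ascPochhammer ℂ (n + 1 - j)).eval (b + j) with hG
    have hA : (∑ i ∈ range (n + 1), (-1 : ℂ) ^ (i+1) * (n.choose (i+1) : ℂ) *
          (ascPochhammer ℂ (i+1)).eval c * (ascPochhammer ℂ (n - i)).eval (b + (i+1 : ℕ)))
          + (-1 : ℂ) ^ 0 * ((n+1).choose 0 : ℂ) * (ascPochhammer ℂ 0).eval c *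
            (ascPochhammer ℂ (n + 1 - 0)).eval (b + (0 : ℕ))
        = ∑ j ∈ range (n + 2), G j := by
      rw [Finset.sum_range_succ' G (n + 1)]
      simp [hG]
    rw [add_right_comm, hA]
    have hG2 : ∑ j ∈ range (n + 2), G j = (b + n) * (ascPochhammer ℂ n).eval (b - c) := by
      rw [Finset.sum_range_succ]
      have hzero : G (n + 1) = 0 := by simp [hG, Nat.choose_succ_self]
      rw [hzero, add_zero]
      have hterm : ∀ j ∈ range (n + 1), G j
          = ((-1 : ℂ) ^ j * (n.choose j : ℂ) * (ascPochhammer ℂ j).eval c *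
              (ascPochhammer ℂ (n - j)).eval (b + j)) * (b + n) := by
        intro j hj
        have hjn : j ≤ n := by simpa using Nat.lt_succ_iff.mp (Finset.mem_range.mp hj)
        have h4 : n + 1 - j = (n - j) + 1 := by omega
        have h5 : ((b + j) + ((n - j : ℕ) : ℂ)) = b + n := by
          have : ((n - j : ℕ) : ℂ) = (n : ℂ) - j := by
            push_cast [Nat.cast_sub hjn]; ring
          rw [this]; ring
        show (-1 : ℂ) ^ j * (n.choose j : ℂ) * (ascPochhammer ℂ j).eval c *
            (ascPochhammer ℂ (n + 1 - j)).eval (b + j) = _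
        rw [h4, ascPochhammer_succ_eval, h5]
        ring
      rw [Finset.sum_congr rfl hterm, ← Finset.sum_mul, ih b c]
      ring
    rw [hG2, ascPochhammer_succ_eval]
    ring

private lemma pm_ne (b : ℂ) (hb : ∀ n : ℕ, b ≠ -(n : ℂ)) :
    ∀ (m j : ℕ), (ascPochhammer ℂ m).eval (b + j) ≠ 0 := by
  intro m
  induction m with
  | zero => intro j; simp
  | succ m ih =>
    intro j
    rw [ascPochhammer_succ_eval]
    apply mul_ne_zero (ih j)
    have := hb (j + m)
    intro h
    apply this
    push_cast
    linear_combination h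

private lemma pm_ne' (b : ℂ) (hb : ∀ n : ℕ, b ≠ -(n : ℂ)) (m : ℕ) :
    (ascPochhammer ℂ m).eval b ≠ 0 := by
  have := pm_ne b hb m 0
  simpa using this

private lemma coeff_id (b : ℂ) (hb : ∀ n : ℕ, b ≠ -(n : ℂ)) (a : ℂ) (n : ℕ) :
    ∑ j ∈ range (n + 1), (-1 : ℂ) ^ j * (ascPochhammer ℂ j).eval (b - a) /
        ((ascPochhammer ℂ j).eval b * (j.factorial : ℂ) * ((n - j).factorial : ℂ))
      = (ascPochhammer ℂ n).eval a / ((ascPochhammer ℂ n).eval b * (n.factorial : ℂ)) := by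
  have hk := key n b (b - a)
  rw [sub_sub_cancel] at hk
  have hterm : ∀ j ∈ range (n + 1),
      (-1 : ℂ) ^ j * (ascPochhammer ℂ j).eval (b - a) /
        ((ascPochhammer ℂ j).eval b * (j.factorial : ℂ) * ((n - j).factorial : ℂ))
      = ((-1 : ℂ) ^ j * (n.choose j : ℂ) * (ascPochhammer ℂ j).eval (b - a) *
          (ascPochhammer ℂ (n - j)).eval (b + j)) /
        ((ascPochhammer ℂ n).eval b * (n.factorial : ℂ)) := by
    intro j hj
    have hjn : j ≤ n := Nat.lt_succ_iff.mp (Finset.mem_range.mp hj)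
    have e1 : (ascPochhammer ℂ n).eval b
        = (ascPochhammer ℂ j).eval b * (ascPochhammer ℂ (n - j)).eval (b + j) := by
      have := pm_add j (n - j) b
      rwa [Nat.add_sub_cancel' hjn] at this
    have e2 : (n.factorial : ℂ) = (n.choose j : ℂ) * (j.factorial : ℂ) *
        ((n - j).factorial : ℂ) := by
      rw_mod_cast [Nat.choose_mul_factorial_mul_factorial hjn]
    have h1 : (ascPochhammer ℂ j).eval b ≠ 0 := pm_ne' b hb j
    have h2 : (ascPochhammer ℂ (n - j)).eval (b + j) ≠ 0 := pm_ne b hb (n - j) j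
    have h3 : (j.factorial : ℂ) ≠ 0 := Nat.cast_ne_zero.mpr j.factorial_ne_zero
    have h4 : ((n - j).factorial : ℂ) ≠ 0 := Nat.cast_ne_zero.mpr (n - j).factorial_ne_zero
    have h5 : (n.choose j : ℂ) ≠ 0 := Nat.cast_ne_zero.mpr (Nat.choose_pos hjn).ne'
    rw [e1, e2]
    field_simp
  rw [Finset.sum_congr rfl hterm, ← Finset.sum_div, hk]

private lemma ksummable (b : ℂ) (hb : ∀ n : ℕ, b ≠ -(n : ℂ)) (x z : ℂ) :
    Summable (fun k : ℕ => ‖(ascPochhammer ℂ k).eval x /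
      ((ascPochhammer ℂ k).eval b * (k.factorial : ℂ)) * z ^ k‖) := by
  set A := ‖x‖
  set B := ‖b‖
  set Z := ‖z‖
  obtain ⟨N, hN⟩ := exists_nat_ge (2 * B + 4 * (A + 1) * (Z + 1) + 1)
  apply summable_of_ratio_norm_eventually_le (r := 1/2) (by norm_num)
  filter_upwards [Filter.eventually_ge_atTop N] with k hk
  have hA : 0 ≤ A := norm_nonneg x
  have hB : 0 ≤ B := norm_nonneg b
  have hZ : 0 ≤ Z := norm_nonneg z
  have hK : (N : ℝ) ≤ (k : ℝ) := Nat.cast_le.mpr hk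
  have hKbig : 2 * B + 4 * (A + 1) * (Z + 1) + 1 ≤ (k : ℝ) := le_trans hN hK
  have hfb : (ascPochhammer ℂ k).eval b ≠ 0 := pm_ne' b hb k
  have hbk : b + (k : ℂ) ≠ 0 := by
    intro h; exact hb k (by linear_combination h)
  have hfact : (k.factorial : ℂ) ≠ 0 := Nat.cast_ne_zero.mpr k.factorial_ne_zero
  have hk1 : ((k : ℂ) + 1) ≠ 0 := by
    have h0 : (((k + 1 : ℕ)) : ℂ) ≠ 0 := Nat.cast_ne_zero.mpr (Nat.succ_ne_zero k)
    push_cast at h0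
    exact h0
  have heq : (ascPochhammer ℂ (k+1)).eval x /
        ((ascPochhammer ℂ (k+1)).eval b * ((k+1).factorial : ℂ)) * z ^ (k+1)
      = ((ascPochhammer ℂ k).eval x / ((ascPochhammer ℂ k).eval b * (k.factorial : ℂ)) * z ^ k)
        * ((x + k) * z / ((b + k) * ((k : ℂ) + 1))) := by
    rw [ascPochhammer_succ_eval, ascPochhammer_succ_eval, pow_succ, Nat.factorial_succ]
    push_cast
    field_simp
  rw [heq, norm_mul, Real.norm_of_nonneg (mul_nonneg (norm_nonneg _) (norm_nonneg _)),
    Real.norm_of_nonneg (norm_nonneg _)]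
  have hb1 : Z + B ≤ (k : ℝ) := by nlinarith
  have h1 : ‖x + (k : ℂ)‖ ≤ A + (k : ℝ) := by
    have := norm_add_le x ((k : ℂ))
    simpa [A, Complex.norm_natCast] using this
  have h2 : (k : ℝ) - B ≤ ‖b + (k : ℂ)‖ := by
    have h' : ‖((k : ℕ) : ℂ)‖ ≤ ‖b + (k : ℂ)‖ + ‖b‖ := by
      calc ‖((k : ℕ) : ℂ)‖ = ‖(b + (k : ℂ)) + (-b)‖ := by congr 1; ring
        _ ≤ ‖b + (k : ℂ)‖ + ‖-b‖ := norm_add_le _ _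
        _ = ‖b + (k : ℂ)‖ + ‖b‖ := by rw [norm_neg]
    rw [Complex.norm_natCast] at h'
    have hBn : ‖b‖ = B := rfl
    rw [hBn] at h'
    linarith
  have hr : ‖(x + (k : ℂ)) * z / ((b + (k : ℂ)) * ((k : ℂ) + 1))‖ ≤ 1/2 := by
    rw [norm_div, norm_mul, norm_mul]
    have hknorm1 : ‖((k : ℂ) + 1)‖ = (k : ℝ) + 1 := by
      have : ((k : ℂ) + 1) = (((k+1 : ℕ)) : ℂ) := by push_cast; ring
      rw [this, Complex.norm_natCast]; push_cast; ring
    rw [hknorm1]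
    have hpos : 0 < ‖b + (k : ℂ)‖ * ((k : ℝ) + 1) := by
      apply mul_pos _ (by positivity)
      have : (0:ℝ) < (k : ℝ) - B := by nlinarith
      linarith [h2]
    rw [div_le_iff₀ hpos]
    have hZnorm : ‖z‖ = Z := rfl
    rw [hZnorm]
    nlinarith [mul_nonneg hA hZ, mul_nonneg hZ (le_trans hB (le_trans (le_add_of_nonneg_right (by positivity : (0:ℝ) ≤ 4 * (A + 1) * (Z + 1) + 1)) (by nlinarith : B + (4 * (A + 1) * (Z + 1) + 1) ≤ (k:ℝ)))), mul_nonneg (mul_nonneg hA hZ) (sub_nonneg.mpr hb1), mul_nonneg hZ hB, norm_nonneg (x + (k:ℂ)), mul_le_mul_of_nonneg_right h1 hZ, mul_le_mul_of_nonneg_right h2 (by positivity : (0:ℝ) ≤ (k:ℝ)+1)]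
  calc ‖(ascPochhammer ℂ k).eval x / ((ascPochhammer ℂ k).eval b * (k.factorial : ℂ)) * z ^ k‖ *
        ‖(x + (k:ℂ)) * z / ((b + (k:ℂ)) * ((k : ℂ) + 1))‖
      ≤ ‖(ascPochhammer ℂ k).eval x / ((ascPochhammer ℂ k).eval b * (k.factorial : ℂ)) * z ^ k‖ *
        (1/2) := by
        exact mul_le_mul_of_nonneg_left hr (norm_nonneg _)
    _ = 1/2 * ‖(ascPochhammer ℂ k).eval x /
          ((ascPochhammer ℂ k).eval b * (k.factorial : ℂ)) * z ^ k‖ := by ring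

/-- Kummer's confluent hypergeometric function `M(a,b,z) = ₁F₁(a;b;z)` (complex version). -/
noncomputable def kummerM (a b z : ℂ) : ℂ :=
  ∑' k : ℕ, (ascPochhammer ℂ k).eval a / ((ascPochhammer ℂ k).eval b * (Nat.factorial k)) * z ^ k

/-- Kummer's transformation `M(a,b,z) = e^z M(b-a,b,-z)`. -/
theorem kummer_transformation (a b z : ℂ) (hb : ∀ n : ℕ, b ≠ -(n : ℂ)) :
    kummerM a b z = Complex.exp z * kummerM (b - a) b (-z) := by
  unfold kummerM
  rw [Complex.exp_eq_exp_ℂ, NormedSpace.exp_eq_tsum_div]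
  have hf : Summable (fun n : ℕ => ‖z ^ n / (n.factorial : ℂ)‖) :=
    NormedSpace.norm_expSeries_div_summable z
  have hg : Summable (fun k : ℕ => ‖(ascPochhammer ℂ k).eval (b - a) /
      ((ascPochhammer ℂ k).eval b * (k.factorial : ℂ)) * (-z) ^ k‖) :=
    ksummable b hb (b - a) (-z)
  rw [tsum_mul_tsum_eq_tsum_sum_antidiagonal_of_summable_norm hf hg]
  apply tsum_congr
  intro n
  rw [Finset.Nat.sum_antidiagonal_eq_sum_range_succ_mk]
  rw [← Finset.sum_range_reflect]
  simp only [Nat.succ_sub_one]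
  have hterm : ∀ j ∈ range (n + 1),
      z ^ (n - j) / (((n - j).factorial : ℂ)) *
        ((ascPochhammer ℂ (n - (n - j))).eval (b - a) /
          ((ascPochhammer ℂ (n - (n - j))).eval b * ((n - (n - j)).factorial : ℂ)) *
            (-z) ^ (n - (n - j)))
      = z ^ n * ((-1 : ℂ) ^ j * (ascPochhammer ℂ j).eval (b - a) /
          ((ascPochhammer ℂ j).eval b * (j.factorial : ℂ) * ((n - j).factorial : ℂ))) := by
    intro j hj
    have hjn : j ≤ n := Nat.lt_succ_iff.mp (Finset.mem_range.mp hj)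
    have h0 : n - (n - j) = j := by omega
    rw [h0]
    have hzp : z ^ (n - j) * z ^ j = z ^ n := by
      rw [← pow_add]
      congr 1
      omega
    have hnz : (-z) ^ j = (-1 : ℂ) ^ j * z ^ j := by rw [neg_pow]
    have h1 : (ascPochhammer ℂ j).eval b ≠ 0 := pm_ne' b hb j
    have h3 : (j.factorial : ℂ) ≠ 0 := Nat.cast_ne_zero.mpr j.factorial_ne_zero
    have h4 : ((n - j).factorial : ℂ) ≠ 0 := Nat.cast_ne_zero.mpr (n - j).factorial_ne_zero
    rw [hnz, ← hzp]
    field_simp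
  rw [Finset.sum_congr rfl hterm, ← Finset.mul_sum, coeff_id b hb a n]
  ring
end

section
/- First Barnes lemma: for complex a, b, c, d such that a+c, a+d, b+c, b+d are not nonpositive integers and Re(a+b+c+d) < 1, one has (1/2πi) ∫_{-i∞}^{+i∞} Γ(a+s)Γ(b+s)Γ(c-s)Γ(d-s) ds = Γ(a+c)Γ(a+d)Γ(b+c)Γ(b+d)/Γ(a+b+c+d), where the contour separates the poles of Γ(a+s)Γ(b+s) from those of Γ(c-s)Γ(d-s). -/
open Complex MeasureTheory Set FourierTransform
open scoped Real RealInnerProductSpace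

noncomputable section BarnesAux

/-- Auxiliary function: `Φ p q u = exp (p u) / (1 + eᵘ)^(p+q)`, written via `exp` and `log`. -/
def barnesPhi (p q : ℂ) (u : ℝ) : ℂ :=
  Complex.exp (p * u - (p + q) * Real.log (1 + Real.exp u))

lemma one_add_exp_pos (u : ℝ) : 0 < 1 + Real.exp u := by positivity

lemma barnesPhi_norm (p q : ℂ) (u : ℝ) :
    ‖barnesPhi p q u‖ = Real.exp (p.re * u - (p + q).re * Real.log (1 + Real.exp u)) := by
  rw [barnesPhi, Complex.norm_exp]
  congr 1
  simp [Complex.sub_re, Complex.mul_re]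

lemma barnesPhi_continuous (p q : ℂ) : Continuous (barnesPhi p q) := by
  apply Complex.continuous_exp.comp
  apply Continuous.sub
  · exact continuous_const.mul Complex.continuous_ofReal
  · exact continuous_const.mul (Complex.continuous_ofReal.comp
      ((continuous_const.add Real.continuous_exp).log fun u => (one_add_exp_pos u).ne'))

lemma integrableOn_Iic_of_neg {E : Type*} [NormedAddCommGroup E] {f : ℝ → E}
    (h : IntegrableOn (fun x : ℝ => f (-x)) (Ici (0):Set ℝ)) :
    IntegrableOn f (Iic (0:ℝ)) := by
  rw [show (volume : Measure ℝ) = Measure.map (fun x : ℝ => -x) volume from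
    (Measure.map_neg_eq_self _).symm]
  have m : MeasurableEmbedding fun x : ℝ => -x := (Homeomorph.neg ℝ).measurableEmbedding
  rw [m.integrableOn_map_iff]
  simpa [Function.comp_def, neg_Iic, neg_zero] using h

lemma barnesPhi_integrable {p q : ℂ} (hp : 0 < p.re) (hq : 0 < q.re) :
    Integrable (barnesPhi p q) := by
  have hmeas := ((barnesPhi_continuous p q).aestronglyMeasurable (μ := volume))
  have hIic : IntegrableOn (barnesPhi p q) (Iic (0:ℝ)) := by
    apply Integrable.mono' (g := fun u : ℝ => Real.exp (p.re * u))
    · apply integrableOn_Iic_of_neg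
      rw [integrableOn_Ici_iff_integrableOn_Ioi]
      exact (exp_neg_integrableOn_Ioi 0 hp).congr_fun
        (fun x _ => by simp only [neg_mul, mul_neg]) measurableSet_Ioi
    · exact hmeas.restrict
    · filter_upwards [ae_restrict_mem measurableSet_Iic] with u _
      rw [barnesPhi_norm]
      apply Real.exp_le_exp.2
      have h1 : 0 ≤ Real.log (1 + Real.exp u) :=
        Real.log_nonneg (by nlinarith [Real.exp_pos u])
      have h2 : 0 < (p+q).re := by rw [Complex.add_re]; positivity
      nlinarith
  have hIoi : IntegrableOn (barnesPhi p q) (Ioi (0:ℝ)) := by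
    apply Integrable.mono' (g := fun u : ℝ => Real.exp (-q.re * u))
    · exact exp_neg_integrableOn_Ioi 0 hq
    · exact hmeas.restrict
    · filter_upwards [ae_restrict_mem measurableSet_Ioi] with u hu
      rw [barnesPhi_norm]
      apply Real.exp_le_exp.2
      have h1 : u ≤ Real.log (1 + Real.exp u) := by
        nth_rewrite 1 [← Real.log_exp u]
        exact Real.log_le_log (Real.exp_pos u) (by linarith)
      have h2 : (p+q).re = p.re + q.re := Complex.add_re p q
      have h3 := mul_le_mul_of_nonneg_left h1 (by positivity : (0:ℝ) ≤ p.re + q.re)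
      rw [h2]
      nlinarith
  rw [← integrableOn_univ, ← Iic_union_Ioi (a := (0:ℝ))]
  exact hIic.union hIoi

lemma cpow_ofReal_pos {x : ℝ} (hx : 0 < x) (z : ℂ) :
    (x : ℂ) ^ z = Complex.exp (z * Real.log x) := by
  rw [Complex.cpow_def_of_ne_zero (by exact_mod_cast hx.ne'), ← Complex.ofReal_log hx.le,
    mul_comm]

lemma barnesPhi_integral {p q : ℂ} (hp : 0 < p.re) (hq : 0 < q.re) :
    ∫ u : ℝ, barnesPhi p q u = Complex.Gamma p * Complex.Gamma q / Complex.Gamma (p + q) := by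
  have hGne : Complex.Gamma (p + q) ≠ 0 := by
    apply Complex.Gamma_ne_zero
    intro m h
    have := congrArg Complex.re h
    simp only [Complex.add_re, Complex.neg_re, Complex.natCast_re] at this
    have : (0:ℝ) ≤ m := Nat.cast_nonneg m
    linarith [hp, hq, Complex.add_re p q]
  have hbeta := Complex.Gamma_mul_Gamma_eq_betaIntegral hp hq
  -- it suffices to show that ∫ barnesPhi = betaIntegral p q
  have key : ∫ u : ℝ, barnesPhi p q u = Complex.betaIntegral p q := by
    set f : ℝ → ℝ := fun u => Real.exp u / (1 + Real.exp u) with hf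
    set f' : ℝ → ℝ := fun u => Real.exp u / (1 + Real.exp u) ^ 2 with hf'
    have hd : ∀ x ∈ (univ : Set ℝ), HasDerivWithinAt f (f' x) univ x := by
      intro x _
      apply HasDerivAt.hasDerivWithinAt
      have := (Real.hasDerivAt_exp x).div ((hasDerivAt_const x (1:ℝ)).add
        (Real.hasDerivAt_exp x)) (one_add_exp_pos x).ne'
      convert this using 1
      case e'_9 =>
        show Real.exp x / (1 + Real.exp x) ^ 2 = _
        simp only [Pi.add_apply]
        ring
      all_goals rfl
    have hmono : StrictMono f := by
      intro u v huv
      rw [hf]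
      have h1 := one_add_exp_pos u
      have h2 := one_add_exp_pos v
      rw [div_lt_div_iff₀ h1 h2]
      have := Real.exp_lt_exp.2 huv
      nlinarith
    have himg : f '' univ = Ioo (0:ℝ) 1 := by
      apply Subset.antisymm
      · rintro - ⟨u, -, rfl⟩
        constructor
        · positivity
        · rw [div_lt_one (one_add_exp_pos u)]; linarith [Real.exp_pos u]
      · rintro x ⟨hx0, hx1⟩
        refine ⟨Real.log (x / (1 - x)), trivial, ?_⟩
        have h1x : 0 < 1 - x := by linarith
        have : Real.exp (Real.log (x / (1-x))) = x / (1-x) :=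
          Real.exp_log (by positivity)
        rw [hf]
        simp only [this]
        field_simp
        ring
    have hbi : Complex.betaIntegral p q
        = ∫ x in Ioo (0:ℝ) 1, (x:ℂ) ^ (p - 1) * (1 - (x:ℂ)) ^ (q - 1) := by
      rw [Complex.betaIntegral, intervalIntegral.integral_of_le zero_le_one,
        integral_Ioc_eq_integral_Ioo]
    rw [hbi, ← himg,
      integral_image_eq_integral_abs_deriv_smul MeasurableSet.univ hd hmono.injective.injOn]
    rw [setIntegral_univ]
    apply integral_congr_ae
    filter_upwards with u
    have hLpos := one_add_exp_pos u
    have hfu : 0 < f u := by rw [hf]; positivity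
    have hfu1 : 0 < 1 - f u := by
      rw [hf]; simp only; rw [sub_pos, div_lt_one hLpos]; linarith [Real.exp_pos u]
    have e1 : ((f u : ℝ) : ℂ) ^ (p - 1) = Complex.exp ((p-1) * Real.log (f u)) :=
      cpow_ofReal_pos hfu _
    have e2 : (1 - ((f u : ℝ) : ℂ)) ^ (q - 1) = Complex.exp ((q-1) * Real.log (1 - f u)) := by
      rw [show (1 - ((f u : ℝ):ℂ)) = ((1 - f u : ℝ) : ℂ) by push_cast; ring]
      exact cpow_ofReal_pos hfu1 _
    have hlog1 : Real.log (f u) = u - Real.log (1 + Real.exp u) := by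
      rw [hf]
      simp only
      rw [Real.log_div (Real.exp_ne_zero u) hLpos.ne', Real.log_exp]
    have hlog2 : Real.log (1 - f u) = -Real.log (1 + Real.exp u) := by
      have : 1 - f u = (1 + Real.exp u)⁻¹ := by
        rw [hf]; field_simp; ring
      rw [this, Real.log_inv]
    have habs : |f' u| = f' u := abs_of_pos (by rw [hf']; positivity)
    have hf'exp : f' u = Real.exp (u - 2 * Real.log (1 + Real.exp u)) := by
      rw [hf']
      simp only
      rw [Real.exp_sub, show (2:ℝ) * Real.log (1 + Real.exp u)
          = Real.log ((1 + Real.exp u) ^ 2) by rw [Real.log_pow]; push_cast; ring,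
        Real.exp_log (by positivity)]
    rw [Complex.real_smul, habs, hf'exp, Complex.ofReal_exp, e1, e2, hlog1, hlog2, barnesPhi,
      ← Complex.exp_add, ← Complex.exp_add]
    congr 1
    push_cast
    ring
  rw [key, hbeta, mul_comm, mul_div_assoc, div_self hGne, mul_one]

lemma barnesPhi_fourier {p q : ℂ} (hp : 0 < p.re) (hq : 0 < q.re) (w : ℝ) :
    𝓕 (barnesPhi p q) w
      = Complex.Gamma (p - (2*π*w : ℝ) * Complex.I) * Complex.Gamma (q + (2*π*w : ℝ) * Complex.I)
          / Complex.Gamma (p + q) := by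
  rw [Real.fourier_eq']
  have key : ∀ v : ℝ, Complex.exp (((-2 * π * (inner ℝ v w : ℝ) : ℝ) : ℂ) * Complex.I) • barnesPhi p q v
      = barnesPhi (p - (2*π*w : ℝ) * Complex.I) (q + (2*π*w : ℝ) * Complex.I) v := by
    intro v
    have hinner : (inner ℝ v w : ℝ) = v * w := by
      rw [RCLike.inner_apply', conj_trivial]
    rw [smul_eq_mul, barnesPhi, barnesPhi, ← Complex.exp_add, hinner]
    congr 1
    push_cast
    ring
  simp_rw [key]
  rw [barnesPhi_integral (by simp [hp]) (by simp [hq])]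
  rw [show (p - (2*π*w : ℝ) * Complex.I) + (q + (2*π*w : ℝ) * Complex.I) = p + q by ring]

lemma barnesPhi_hasDerivAt (p q : ℂ) (u : ℝ) :
    HasDerivAt (barnesPhi p q)
      (p * barnesPhi p q u - (p + q) * barnesPhi (p+1) q u) u := by
  set L : ℂ := (Real.log (1 + Real.exp u) : ℂ) with hLdef
  have hL : HasDerivAt (fun u : ℝ => Real.log (1 + Real.exp u))
      (Real.exp u / (1 + Real.exp u)) u :=
    ((Real.hasDerivAt_exp u).const_add 1).log (one_add_exp_pos u).ne'
  have hg : HasDerivAt (fun u : ℝ => p * (u:ℂ) - (p + q) * (Real.log (1 + Real.exp u) : ℂ))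
      (p - (p + q) * ((Real.exp u / (1 + Real.exp u) : ℝ) : ℂ)) u := by
    have h1 : HasDerivAt (fun u : ℝ => p * (u:ℂ)) p u := by
      simpa using ((hasDerivAt_id u).ofReal_comp).const_mul p
    have h2 : HasDerivAt (fun u : ℝ => (p+q) * (Real.log (1 + Real.exp u) : ℂ))
        ((p+q) * ((Real.exp u / (1 + Real.exp u) : ℝ) : ℂ)) u :=
      (hL.ofReal_comp).const_mul (p+q)
    exact h1.sub h2
  have key := hg.cexp
  have hratio : ((Real.exp u / (1 + Real.exp u) : ℝ) : ℂ)
      = Complex.exp ((u : ℂ) - L) := by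
    have h0 : Real.exp u / (1 + Real.exp u) = Real.exp (u - Real.log (1 + Real.exp u)) := by
      rw [Real.exp_sub, Real.exp_log (one_add_exp_pos u)]
    rw [h0, Complex.ofReal_exp, hLdef]
    push_cast
    ring_nf
  have hE : Complex.exp (p * u - (p+q) * L) * Complex.exp ((u:ℂ) - L)
      = barnesPhi (p+1) q u := by
    rw [← Complex.exp_add, barnesPhi]
    congr 1
    ring
  have hid : Complex.exp (p * u - (p+q) * L)
        * (p - (p + q) * ((Real.exp u / (1 + Real.exp u) : ℝ) : ℂ))
      = p * barnesPhi p q u - (p + q) * barnesPhi (p+1) q u := by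
    rw [hratio, ← hE, barnesPhi]
    ring
  exact hid ▸ key

lemma Gamma_ne_zero_of_re_pos' {z : ℂ} (hz : 0 < z.re) : Complex.Gamma z ≠ 0 := by
  apply Complex.Gamma_ne_zero
  intro m h
  have := congrArg Complex.re h
  simp only [Complex.neg_re, Complex.natCast_re] at this
  have h0 : (0:ℝ) ≤ m := Nat.cast_nonneg m
  linarith

lemma fourier_barnesPhi_continuous (p q : ℂ) {hp : 0 < p.re} {hq : 0 < q.re} :
    Continuous (𝓕 (barnesPhi p q)) :=
  VectorFourier.fourierIntegral_continuous Real.continuous_fourierChar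
    (by exact continuous_inner) (barnesPhi_integrable hp hq)

lemma fourier_barnesPhi_integrable {p q : ℂ} (hp : 0 < p.re) (hq : 0 < q.re) :
    Integrable (𝓕 (barnesPhi p q)) := by
  have hp1 : 0 < (p+1).re := by simp only [Complex.add_re, Complex.one_re]; linarith
  have hp2 : 0 < (p+1+1).re := by
    simp only [Complex.add_re, Complex.one_re]; linarith
  have hf : Integrable (barnesPhi p q) := barnesPhi_integrable hp hq
  set D1 : ℝ → ℂ := fun u => p * barnesPhi p q u - (p + q) * barnesPhi (p+1) q u with hD1
  set D2 : ℝ → ℂ := fun u => p * (p * barnesPhi p q u - (p + q) * barnesPhi (p+1) q u)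
      - (p + q) * ((p+1) * barnesPhi (p+1) q u - ((p+1) + q) * barnesPhi (p+1+1) q u) with hD2
  have hd1 : ∀ u, HasDerivAt (barnesPhi p q) (D1 u) u := barnesPhi_hasDerivAt p q
  have hd2 : ∀ u, HasDerivAt D1 (D2 u) u := fun u =>
    ((barnesPhi_hasDerivAt p q u).const_mul p).sub
      ((barnesPhi_hasDerivAt (p+1) q u).const_mul (p+q))
  have hD1int : Integrable D1 :=
    (hf.const_mul p).sub ((barnesPhi_integrable hp1 hq).const_mul (p+q))
  have hD2int : Integrable D2 :=
    (((hf.const_mul p).sub ((barnesPhi_integrable hp1 hq).const_mul (p+q))).const_mul p).sub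
      ((((barnesPhi_integrable hp1 hq).const_mul (p+1)).sub
        ((barnesPhi_integrable hp2 hq).const_mul ((p+1)+q))).const_mul (p+q))
  have hder1 : deriv (barnesPhi p q) = D1 := funext fun u => (hd1 u).deriv
  have hder2 : deriv D1 = D2 := funext fun u => (hd2 u).deriv
  have key1 : 𝓕 D1 = fun x : ℝ => (2 * ↑π * Complex.I * ↑x) • 𝓕 (barnesPhi p q) x := by
    rw [← hder1]
    exact Real.fourier_deriv hf (fun u => (hd1 u).differentiableAt) (hder1 ▸ hD1int)
  have key2 : 𝓕 D2 = fun x : ℝ => (2 * ↑π * Complex.I * ↑x) • 𝓕 D1 x := by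
    rw [← hder2]
    exact Real.fourier_deriv hD1int (fun u => (hd2 u).differentiableAt)
      (hder2 ▸ hD2int)
  set C0 := ∫ u : ℝ, ‖barnesPhi p q u‖ with hC0
  set C2 := ∫ u : ℝ, ‖D2 u‖ with hC2
  have hbound : ∀ x : ℝ, ‖𝓕 (barnesPhi p q) x‖ * (1 + x^2) ≤ C0 + C2 / (2*π)^2 := by
    intro x
    have b0 : ‖𝓕 (barnesPhi p q) x‖ ≤ C0 :=
      VectorFourier.norm_fourierIntegral_le_integral_norm _ _ _ _ _
    have b2' : ‖𝓕 D2 x‖ ≤ C2 :=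
      VectorFourier.norm_fourierIntegral_le_integral_norm _ _ _ _ _
    have hnorm : ‖𝓕 D2 x‖ = (2*π)^2 * x^2 * ‖𝓕 (barnesPhi p q) x‖ := by
      rw [key2]
      simp only
      rw [key1]
      simp only [norm_smul, norm_mul, Complex.norm_I, Complex.norm_real, Real.norm_eq_abs,
        Complex.norm_ofNat]
      rw [abs_of_pos Real.pi_pos,
        show (2*π)^2 * x^2 * ‖𝓕 (barnesPhi p q) x‖
          = (2*π*|x|) * (2*π*|x|) * ‖𝓕 (barnesPhi p q) x‖ by rw [← _root_.sq_abs x]; ring]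
      ring
    rw [hnorm] at b2'
    have hpi2 : (0:ℝ) < (2*π)^2 := by positivity
    have hx2 : x^2 * ‖𝓕 (barnesPhi p q) x‖ ≤ C2 / (2*π)^2 := by
      rw [le_div_iff₀ hpi2]
      nlinarith
    nlinarith
  apply Integrable.mono' (g := fun x : ℝ => (C0 + C2 / (2*π)^2) * (1 + x^2)⁻¹)
  · exact integrable_inv_one_add_sq.const_mul _
  · exact (fourier_barnesPhi_continuous p q (hp := hp) (hq := hq)).aestronglyMeasurable
  · filter_upwards with x
    have h1 : (0:ℝ) < 1 + x^2 := by positivity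
    rw [← div_eq_mul_inv, le_div_iff₀ h1]
    exact hbound x

lemma fourier_self_adjoint {φ g : ℝ → ℂ} (hφ : Integrable φ) (hg : Integrable g) :
    ∫ ξ : ℝ, 𝓕 φ ξ * g ξ = ∫ x : ℝ, φ x * 𝓕 g x := by
  have hflip : (innerₗ ℝ).flip = innerₗ ℝ := by
    apply LinearMap.ext; intro x; apply LinearMap.ext; intro y
    exact real_inner_comm (x : ℝ) y
  have h := VectorFourier.integral_fourierIntegral_smul_eq_flip (e := Real.fourierChar)
    (L := innerₗ ℝ) Real.continuous_fourierChar (by exact continuous_inner) hφ hg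
  rw [hflip] at h
  simp only [smul_eq_mul] at h
  exact h

end BarnesAux

/-- First Barnes lemma: parametrising the contour along the imaginary
axis as `s = it`, so that `(1/2πi)∫_{-i∞}^{+i∞} ds = (1/2π)∫_ℝ dt`. The hypotheses
`0 < Re a, Re b, Re c, Re d` express that the imaginary axis separates the poles of
`Γ(a+s)Γ(b+s)` from those of `Γ(c-s)Γ(d-s)`. -/
theorem first_barnes_lemma (a b c d : ℂ)
    (hac : ∀ n : ℕ, a + c ≠ -(n : ℂ)) (had : ∀ n : ℕ, a + d ≠ -(n : ℂ))
    (hbc : ∀ n : ℕ, b + c ≠ -(n : ℂ)) (hbd : ∀ n : ℕ, b + d ≠ -(n : ℂ))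
    (hre : (a + b + c + d).re < 1)
    (ha : 0 < a.re) (hb : 0 < b.re) (hc : 0 < c.re) (hd : 0 < d.re) :
    (1 / (2 * Real.pi)) * (∫ t : ℝ,
        Complex.Gamma (a + Complex.I * t) * Complex.Gamma (b + Complex.I * t) *
        Complex.Gamma (c - Complex.I * t) * Complex.Gamma (d - Complex.I * t))
      = Complex.Gamma (a + c) * Complex.Gamma (a + d) * Complex.Gamma (b + c) *
          Complex.Gamma (b + d) / Complex.Gamma (a + b + c + d) := by
  have hπ : (0:ℝ) < π := Real.pi_pos
  set φ := barnesPhi a c with hφdef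
  set ψ := barnesPhi b d with hψdef
  have hφint : Integrable φ := barnesPhi_integrable ha hc
  have hψint : Integrable ψ := barnesPhi_integrable hb hd
  have hFψint : Integrable (𝓕 ψ) := fourier_barnesPhi_integrable hb hd
  have hGac : Complex.Gamma (a+c) ≠ 0 := Gamma_ne_zero_of_re_pos' (by
    rw [Complex.add_re]; exact add_pos ha hc)
  have hGbd : Complex.Gamma (b+d) ≠ 0 := Gamma_ne_zero_of_re_pos' (by
    rw [Complex.add_re]; exact add_pos hb hd)
  have key : ∀ t : ℝ,
      Complex.Gamma (a + Complex.I * t) * Complex.Gamma (b + Complex.I * t) *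
        Complex.Gamma (c - Complex.I * t) * Complex.Gamma (d - Complex.I * t)
      = Complex.Gamma (a+c) * Complex.Gamma (b+d) *
          (𝓕 φ (-(1/(2*π)) * t) * 𝓕 ψ (-(1/(2*π)) * t)) := by
    intro t
    have h1 := barnesPhi_fourier ha hc (-(1/(2*π)) * t)
    have h2 := barnesPhi_fourier hb hd (-(1/(2*π)) * t)
    have harg : (2*π*(-(1/(2*π)) * t) : ℝ) = -t := by field_simp
    rw [harg] at h1 h2
    rw [show a - ((-t : ℝ) : ℂ) * Complex.I = a + Complex.I * t by push_cast; ring,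
      show c + ((-t : ℝ) : ℂ) * Complex.I = c - Complex.I * t by push_cast; ring] at h1
    rw [show b - ((-t : ℝ) : ℂ) * Complex.I = b + Complex.I * t by push_cast; ring,
      show d + ((-t : ℝ) : ℂ) * Complex.I = d - Complex.I * t by push_cast; ring] at h2
    rw [h1, h2]
    field_simp
  simp_rw [key]
  rw [MeasureTheory.integral_const_mul]
  have hcv : (∫ t : ℝ, 𝓕 φ (-(1/(2*π)) * t) * 𝓕 ψ (-(1/(2*π)) * t))
      = |(-(1/(2*π)))⁻¹| • ∫ ξ : ℝ, 𝓕 φ ξ * 𝓕 ψ ξ :=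
    MeasureTheory.Measure.integral_comp_mul_left (fun ξ => 𝓕 φ ξ * 𝓕 ψ ξ) (-(1/(2*π)))
  have habs : |(-(1/(2*π)))⁻¹| = 2*π := by
    rw [show (-(1/(2*π)))⁻¹ = -(2*π) by field_simp, abs_neg, abs_of_pos (by positivity)]
  rw [hcv, habs]
  have hmult : (∫ ξ : ℝ, 𝓕 φ ξ * 𝓕 ψ ξ) = ∫ x : ℝ, φ x * ψ (-x) := by
    rw [fourier_self_adjoint hφint hFψint]
    apply integral_congr_ae
    filter_upwards with x
    congr 1
    have hinv : 𝓕⁻ (𝓕 ψ) = ψ := (barnesPhi_continuous b d).fourierInv_fourier_eq hψint hFψint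
    calc 𝓕 (𝓕 ψ) x = 𝓕⁻ (𝓕 ψ) (-x) := by
          rw [Real.fourierInv_eq_fourier_neg, neg_neg]
      _ = ψ (-x) := by rw [hinv]
  have hprod : ∀ x : ℝ, φ x * ψ (-x) = barnesPhi (a+d) (b+c) x := by
    intro x
    rw [hφdef, hψdef, barnesPhi, barnesPhi, barnesPhi, ← Complex.exp_add]
    have hL : Real.log (1 + Real.exp (-x)) = Real.log (1 + Real.exp x) - x := by
      rw [show (1:ℝ) + Real.exp (-x) = (1 + Real.exp x) * Real.exp (-x) by
          rw [add_mul, one_mul, ← Real.exp_add]; simp; ring,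
        Real.log_mul (one_add_exp_pos x).ne' (Real.exp_ne_zero _), Real.log_exp]
      ring
    rw [hL]
    congr 1
    push_cast
    ring
  have hval : (∫ x : ℝ, φ x * ψ (-x))
      = Complex.Gamma (a+d) * Complex.Gamma (b+c) / Complex.Gamma (a+b+c+d) := by
    simp_rw [hprod]
    rw [barnesPhi_integral (by rw [Complex.add_re]; exact add_pos ha hd)
      (by rw [Complex.add_re]; exact add_pos hb hc)]
    rw [show (a+d)+(b+c) = a+b+c+d by ring]
  rw [hmult, hval, Complex.real_smul]
  have hπc : ((π : ℝ) : ℂ) ≠ 0 := Complex.ofReal_ne_zero.mpr hπ.ne'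
  have h2π : (2 * ((π:ℝ) : ℂ)) ≠ 0 := mul_ne_zero two_ne_zero hπc
  rw [show ((2*π : ℝ) : ℂ) = 2 * ((π:ℝ):ℂ) by push_cast; ring]
  rw [show (1/(2 * ((Real.pi:ℝ):ℂ)))
        * (Complex.Gamma (a+c) * Complex.Gamma (b+d)
          * (2 * ((π:ℝ):ℂ) * (Complex.Gamma (a+d) * Complex.Gamma (b+c)
              / Complex.Gamma (a+b+c+d))))
      = ((2 * ((π:ℝ):ℂ)) / (2 * ((π:ℝ):ℂ)))
        * (Complex.Gamma (a+c) * Complex.Gamma (b+d)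
          * (Complex.Gamma (a+d) * Complex.Gamma (b+c) / Complex.Gamma (a+b+c+d))) by ring]
  rw [div_self h2π, one_mul]
  ring
end

section
/- For real α with 0 < α < 2, α ≠ 1, the function x(α) = i α cot(πα/2)/(2π²) satisfies x(α) = x(−α) and x(2−α) − x(α) = D(α) D(2−α) · 2(1−α)/(α(2−α)), where D(α) = D₁(α, 1/2) is given by D₁(α, ν) = (iν)^{-1/2} Γ(ν)^{-1/ν} (1−ν)^{1/2} Γ(α/2 + 1/(2ν)) / Γ(α/2 + (1−ν)/(2ν)) evaluated at ν = 1/2. -/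
open Complex Real

private lemma cpowTwoAux (x : ℂ) : x ^ (2:ℂ) = x * x := by
  rw [show (2:ℂ) = ((2:ℕ):ℂ) by norm_num, cpow_natCast]; ring

/-- `x(α) = i α cot(πα/2)/(2π²)`. -/
noncomputable def xRefl (alpha : ℝ) : ℂ :=
  Complex.I * (alpha : ℂ) *
    (Complex.cos (Real.pi * alpha / 2) / Complex.sin (Real.pi * alpha / 2)) /
    (2 * (Real.pi : ℂ) ^ 2)

/-- `D₁(α, ν) = (iν)^{-1/2} Γ(ν)^{-1/ν} (1−ν)^{1/2} Γ(α/2 + 1/(2ν)) / Γ(α/2 + (1−ν)/(2ν))`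
evaluated at `ν = 1/2`. -/
noncomputable def DFF (alpha : ℝ) : ℂ :=
  (Complex.I * (1 / 2 : ℂ)) ^ (-(1 / 2 : ℂ)) * Complex.Gamma (1 / 2) ^ (-(2 : ℂ)) *
    ((1 / 2 : ℂ)) ^ ((1 / 2 : ℂ)) *
    Complex.Gamma ((alpha : ℂ) / 2 + 1) / Complex.Gamma ((alpha : ℂ) / 2 + 1 / 2)

/-- the free-fermion reflection equations are solved by
`x(α) = iα cot(πα/2)/(2π²)`. -/
theorem reflection_relations_free_fermion (alpha : ℝ)
    (h0 : 0 < alpha) (h2 : alpha < 2) (h1 : alpha ≠ 1) :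
    xRefl alpha = xRefl (-alpha) ∧
    xRefl (2 - alpha) - xRefl alpha
      = DFF alpha * DFF (2 - alpha) *
          (2 * (1 - (alpha : ℂ)) / ((alpha : ℂ) * (2 - (alpha : ℂ)))) := by
  have hπ : (0:ℝ) < Real.pi := Real.pi_pos
  have hπC : ((Real.pi : ℝ) : ℂ) ≠ 0 := by exact_mod_cast Real.pi_ne_zero
  have haC : ((alpha : ℝ) : ℂ) ≠ 0 := by exact_mod_cast h0.ne'
  have ha2C : (2 : ℂ) - (alpha : ℂ) ≠ 0 := by
    intro h
    have : (alpha : ℂ) = 2 := by linear_combination -h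
    have : alpha = 2 := by exact_mod_cast this
    linarith
  have ha1C : (1 : ℂ) - (alpha : ℂ) ≠ 0 := by
    intro h
    have : (alpha : ℂ) = 1 := by linear_combination -h
    exact h1 (by exact_mod_cast this)
  have hx1 : xRefl alpha = xRefl (-alpha) := by
    unfold xRefl
    push_cast
    rw [show (Real.pi:ℂ) * (-(alpha:ℂ)) / 2 = -((Real.pi:ℂ) * (alpha:ℂ) / 2) by ring,
      Complex.cos_neg, Complex.sin_neg]
    ring
  refine ⟨hx1, ?_⟩
  set T : ℂ := (Real.pi : ℂ) * (alpha : ℂ) / 2 with hT_def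
  have hTr : T = ((Real.pi * alpha / 2 : ℝ) : ℂ) := by push_cast; ring
  have hsR : Real.sin (Real.pi * alpha / 2) ≠ 0 := by
    have : 0 < Real.sin (Real.pi * alpha / 2) := by
      apply Real.sin_pos_of_pos_of_lt_pi
      · positivity
      · nlinarith
    linarith
  have hcR : Real.cos (Real.pi * alpha / 2) ≠ 0 := by
    intro h
    rcases Real.cos_eq_zero_iff.mp h with ⟨k, hk⟩
    have hα : alpha = 2 * (k:ℝ) + 1 := by
      have := Real.pi_ne_zero
      field_simp at hk
      nlinarith
    have h1k : (-1 : ℝ) < (k:ℝ) := by linarith [hα ▸ h0]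
    have h2k : ((k:ℝ)) < 1 := by nlinarith [hα ▸ h2]
    have h1k' : (-1 : ℤ) < k := by exact_mod_cast h1k
    have h2k' : k < (1 : ℤ) := by exact_mod_cast h2k
    have hk0 : k = 0 := by omega
    apply h1; rw [hα, hk0]; norm_num
  have hs : Complex.sin T ≠ 0 := by
    rw [hTr, ← Complex.ofReal_sin]; exact_mod_cast hsR
  have hc : Complex.cos T ≠ 0 := by
    rw [hTr, ← Complex.ofReal_cos]; exact_mod_cast hcR
  set s := Complex.sin T with hs_def
  set c := Complex.cos T with hc_def
  have hLHS : xRefl (2 - alpha) - xRefl alpha = -Complex.I * c / ((Real.pi:ℂ)^2 * s) := by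
    unfold xRefl
    push_cast
    rw [show (Real.pi:ℂ) * ((2:ℂ) - (alpha:ℂ)) / 2 = (Real.pi:ℂ) - T by rw [hT_def]; ring,
      Complex.cos_pi_sub, Complex.sin_pi_sub, ← hs_def, ← hc_def]
    field_simp [hs, hπC]
    ring
  rw [hLHS]
  set K : ℂ := (Complex.I * (1 / 2 : ℂ)) ^ (-(1 / 2 : ℂ)) * Complex.Gamma (1 / 2) ^ (-(2 : ℂ)) *
      ((1 / 2 : ℂ)) ^ ((1 / 2 : ℂ)) with hK_def
  have hK : K ^ 2 = -Complex.I / (Real.pi:ℂ)^2 := by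
    have hI2 : (Complex.I * (1/2 : ℂ)) ≠ 0 := by simp [Complex.I_ne_zero]
    have e1 : ((Complex.I * (1 / 2 : ℂ)) ^ (-(1 / 2 : ℂ)))^2 = -2 * Complex.I := by
      rw [sq, ← cpow_add _ _ hI2]
      norm_num
      rw [show ((-1:ℂ)) = -(1:ℂ) by norm_num, cpow_neg, cpow_one, mul_inv, Complex.inv_I]
      ring
    have hhalf : ((Real.pi:ℂ)) ^ (1/2:ℂ) * ((Real.pi:ℂ)) ^ (1/2:ℂ) = (Real.pi:ℂ) := by
      rw [← cpow_add _ _ hπC]; norm_num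
    have e2 : Complex.Gamma (1/2 : ℂ) ^ (-(2:ℂ)) = ((Real.pi:ℂ))⁻¹ := by
      rw [Complex.Gamma_one_half_eq, cpow_neg, cpowTwoAux, hhalf]
    have e3 : (((1 / 2 : ℂ)) ^ ((1 / 2 : ℂ)))^2 = 1/2 := by
      rw [sq, ← cpow_add _ _ (by norm_num : (1/2:ℂ) ≠ 0)]
      norm_num
    rw [hK_def, mul_pow, mul_pow, e1, e3, e2]
    field_simp
  set z : ℂ := (alpha : ℂ) / 2 with hz_def
  have hz : z ≠ 0 := by rw [hz_def]; exact div_ne_zero haC two_ne_zero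
  have hz1 : (1:ℂ) - z ≠ 0 := by
    rw [hz_def]; intro h; apply ha2C; linear_combination 2 * h
  have hzh : (1:ℂ)/2 - z ≠ 0 := by
    rw [hz_def]; intro h; apply ha1C; linear_combination 2 * h
  have hzh' : (1:ℂ)/2 - (alpha:ℂ)/2 ≠ 0 := by
    intro h; apply ha1C; linear_combination 2 * h
  have hcast : (((2 - alpha : ℝ)) : ℂ) = 2 - (alpha : ℂ) := by push_cast; ring
  set g1 := Complex.Gamma z with hg1_def
  set g2 := Complex.Gamma (1 - z) with hg2_def
  set g3 := Complex.Gamma (z + 1/2) with hg3_def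
  set g4 := Complex.Gamma (1/2 - z) with hg4_def
  have P1 : g1 * g2 = (Real.pi:ℂ) / s := by
    rw [hg1_def, hg2_def, Complex.Gamma_mul_Gamma_one_sub, hs_def,
      show (Real.pi:ℂ) * z = T by rw [hz_def, hT_def]; ring]
  have P2 : g3 * g4 = (Real.pi:ℂ) / c := by
    have h14 : (1:ℂ) - (z + 1/2) = 1/2 - z := by ring
    rw [hg3_def, hg4_def, ← h14, Complex.Gamma_mul_Gamma_one_sub, hc_def,
      show (Real.pi:ℂ) * (z + 1/2) = T + (Real.pi:ℂ)/2 by rw [hz_def, hT_def]; ring,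
      Complex.sin_add_pi_div_two]
  have eA : Complex.Gamma ((alpha : ℂ) / 2 + 1) = z * g1 := by
    rw [hg1_def, ← Complex.Gamma_add_one z hz, hz_def]
  have eA' : Complex.Gamma (((2 - alpha:ℝ) : ℂ) / 2 + 1) = (1 - z) * g2 := by
    rw [hcast, show (2 - (alpha:ℂ)) / 2 + 1 = (1 - z) + 1 by rw [hz_def]; ring,
      Complex.Gamma_add_one _ hz1, hg2_def]
  have eB : Complex.Gamma ((alpha : ℂ) / 2 + 1/2) = g3 := by
    rw [hg3_def, hz_def]
  have eB' : Complex.Gamma (((2 - alpha:ℝ) : ℂ) / 2 + 1/2) = (1/2 - z) * g4 := by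
    rw [hcast, show (2 - (alpha:ℂ)) / 2 + 1/2 = (1/2 - z) + 1 by rw [hz_def]; ring,
      Complex.Gamma_add_one _ hzh, hg4_def]
  unfold DFF
  rw [← hK_def, eA, eB, eA', eB', div_mul_div_comm,
    show K * (z * g1) * (K * ((1 - z) * g2)) = K ^ 2 * (z * (1 - z)) * (g1 * g2) by ring,
    show g3 * ((1 / 2 - z) * g4) = (1 / 2 - z) * (g3 * g4) by ring,
    hK, P1, P2, hz_def]
  clear_value s c
  have hs' : Complex.exp (-(T * Complex.I)) - Complex.exp (T * Complex.I) ≠ 0 := by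
    intro hq
    apply hs
    rw [hs_def]
    unfold Complex.sin
    rw [neg_mul, hq]
    ring
  have hc' : Complex.exp (T * Complex.I) + Complex.exp (-(T * Complex.I)) ≠ 0 := by
    intro hq
    apply hc
    rw [hc_def]
    unfold Complex.cos
    rw [neg_mul, hq]
    ring
  have hc'' : Complex.exp (-(T * Complex.I)) + Complex.exp (T * Complex.I) ≠ 0 := by
    intro hq
    exact hc' (by linear_combination hq)
  field_simp
end
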